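/- Let n ≥ 2, let f_1, ..., f_n : ℝ → ℝ be continuous and bounded with f_i(0) = 0 and f_i(x) > 0 for all x > 0 (for each i), let K_1, ..., K_n be probability density functions on [0,∞), and let μ : ℝ → ℝ be continuous with μ₀ ≤ μ(y) ≤ μ_max for all y, for some constants μ₀ > 0 and μ_max. For a bounded continuous function y : ℝ → ℝ define recursively G_0[y] = y and, for i = 1, ..., n-1, G_i[y](t) = ∫_0^∞ f_i( ∫_0^∞ G_{i-1}[y](t - s - φ) K_i(φ) dφ ) · exp(-∫_{t-s}^t μ(y(u)) du) ds. Suppose x : ℝ → ℝ is bounded, continuous, differentiable on (0,∞), satisfies x(s) = ξ(s) for all s ≤ 0 where ξ is non-negative with ∫_0^∞ ξ(-φ) K_i(φ) dφ > 0 for each i = 1, ..., n, and satisfies for all t > 0 the scalar distributed delay differential equation x'(t) = f_n( ∫_0^∞ G_{n-1}[x](t - φ) K_n(φ) dφ ) - μ(x(t)) x(t). Then x(t) ≥ 0 for all t ≥ 0. -/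

import Mathlib

open MeasureTheory

/-- The nested functionals `G_i` of the generalized linear chain technique. -/
noncomputable def cyclicG (f K : ℕ → ℝ → ℝ) (μ : ℝ → ℝ) : ℕ → (ℝ → ℝ) → ℝ → ℝ
  | 0, y, t => y t
  | i + 1, y, t =>
      ∫ s in Set.Ioi (0 : ℝ),
        f (i + 1) (∫ φ in Set.Ioi (0 : ℝ), cyclicG f K μ i y (t - s - φ) * K (i + 1) φ)
          * Real.exp (-∫ u in (t - s)..t, μ (y u))

section AuxLemmas
open Set
lemma kint_integrable {K : ℝ → ℝ} (h1 : ∫ φ in Set.Ioi (0:ℝ), K φ = 1) :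
    IntegrableOn K (Set.Ioi 0) := by
  by_contra h
  rw [MeasureTheory.integral_undef h] at h1
  norm_num at h1

lemma exp_term_le {g : ℝ → ℝ} (hg : Continuous g) {μ₀ : ℝ}
    (hlb : ∀ u, μ₀ ≤ g u) {s : ℝ} (hs : 0 ≤ s) (t : ℝ) :
    Real.exp (-∫ u in (t - s)..t, g u) ≤ Real.exp (-(μ₀ * s)) := by
  apply Real.exp_le_exp.2
  have h1 : (∫ u in (t-s)..t, (μ₀ : ℝ)) ≤ ∫ u in (t-s)..t, g u := by
    apply intervalIntegral.integral_mono_on (by linarith)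
      (intervalIntegrable_const) (hg.intervalIntegrable _ _)
    intro u _; exact hlb u
  rw [intervalIntegral.integral_const] at h1
  simp only [smul_eq_mul] at h1
  nlinarith [h1]

lemma exp_term_cont2 {g : ℝ → ℝ} (hg : Continuous g) :
    Continuous (fun p : ℝ × ℝ => Real.exp (-∫ u in (p.1 - p.2)..p.1, g u)) := by
  have hP : Continuous (fun b => ∫ u in (0:ℝ)..b, g u) :=
    intervalIntegral.continuous_primitive (fun a b => hg.intervalIntegrable a b) 0
  have heq : ∀ p : ℝ × ℝ, (∫ u in (p.1 - p.2)..p.1, g u)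
      = (∫ u in (0:ℝ)..p.1, g u) - (∫ u in (0:ℝ)..(p.1 - p.2), g u) := by
    intro p
    rw [← intervalIntegral.integral_interval_sub_left
      (hg.intervalIntegrable 0 p.1) (hg.intervalIntegrable 0 (p.1 - p.2))]
  have : Continuous (fun p : ℝ × ℝ => (∫ u in (0:ℝ)..p.1, g u)
      - (∫ u in (0:ℝ)..(p.1 - p.2), g u)) := by
    exact ((hP.comp continuous_fst).sub (hP.comp (continuous_fst.sub continuous_snd)))
  have := (this.neg).rexp
  convert this using 2 with p
  rw [heq]
  rfl

section Steps
variable {F H G K g : ℝ → ℝ} {μ₀ C : ℝ}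

lemma step_norm_le (hFbdd : ∀ y, |F y| ≤ C)
    (hg : Continuous g) (hlb : ∀ u, μ₀ ≤ g u) {s : ℝ} (hs : 0 ≤ s) (t : ℝ) :
    ‖F (H (t - s)) * Real.exp (-∫ u in (t - s)..t, g u)‖ ≤ C * Real.exp (-(μ₀ * s)) := by
  rw [norm_mul, Real.norm_eq_abs, Real.norm_eq_abs, abs_of_pos (Real.exp_pos _)]
  exact mul_le_mul (hFbdd _) (exp_term_le hg hlb hs t) (Real.exp_pos _).le
    ((abs_nonneg (F 0)).trans (hFbdd 0))

/-- integrability of the s-integrand of `cyclicG (i+1)`. -/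
lemma step_integrand_integrable (hFcont : Continuous F) (hFbdd : ∀ y, |F y| ≤ C)
    (hH : Continuous H) (hg : Continuous g) (hμ₀ : 0 < μ₀) (hlb : ∀ u, μ₀ ≤ g u)
    (t : ℝ) :
    IntegrableOn (fun s => F (H (t - s)) * Real.exp (-∫ u in (t - s)..t, g u))
      (Set.Ioi 0) := by
  have hcont : Continuous (fun s => F (H (t - s)) * Real.exp (-∫ u in (t - s)..t, g u)) := by
    have h1 : Continuous fun s : ℝ => Real.exp (-∫ u in (t - s)..t, g u) := by
      have := (exp_term_cont2 hg).comp
        (Continuous.prodMk (continuous_const : Continuous fun _ : ℝ => t) continuous_id)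
      exact this
    exact ((hFcont.comp (hH.comp (continuous_const.sub continuous_id))).mul h1)
  apply Integrable.mono' (g := fun s => C * Real.exp (-(μ₀ * s)))
  · apply Integrable.const_mul
    have := exp_neg_integrableOn_Ioi 0 hμ₀
    simpa [neg_mul, mul_comm, IntegrableOn] using this
  · exact hcont.aestronglyMeasurable.restrict
  · filter_upwards [ae_restrict_mem measurableSet_Ioi] with s hs
    exact step_norm_le hFbdd hg hlb (le_of_lt hs) t

lemma step_G_bdd (hFbdd : ∀ y, |F y| ≤ C)
    (hg : Continuous g) (hμ₀ : 0 < μ₀) (hlb : ∀ u, μ₀ ≤ g u) :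
    ∃ D, ∀ t, |∫ s in Set.Ioi (0:ℝ), F (H (t - s)) * Real.exp (-∫ u in (t - s)..t, g u)| ≤ D := by
  refine ⟨∫ s in Set.Ioi (0:ℝ), C * Real.exp (-(μ₀ * s)), fun t => ?_⟩
  calc |∫ s in Set.Ioi (0:ℝ), F (H (t - s)) * Real.exp (-∫ u in (t - s)..t, g u)|
      ≤ ∫ s in Set.Ioi (0:ℝ), ‖F (H (t - s)) * Real.exp (-∫ u in (t - s)..t, g u)‖ := by
        rw [← Real.norm_eq_abs]; exact norm_integral_le_integral_norm _
    _ ≤ ∫ s in Set.Ioi (0:ℝ), C * Real.exp (-(μ₀ * s)) := by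
        apply integral_mono_of_nonneg
        · filter_upwards with s; positivity
        · apply Integrable.const_mul
          have := exp_neg_integrableOn_Ioi 0 hμ₀
          simpa [neg_mul, mul_comm, IntegrableOn] using this
        · filter_upwards [ae_restrict_mem measurableSet_Ioi] with s hs
          exact step_norm_le hFbdd hg hlb (le_of_lt hs) t

lemma step_G_cont (hFcont : Continuous F) (hFbdd : ∀ y, |F y| ≤ C)
    (hH : Continuous H) (hg : Continuous g) (hμ₀ : 0 < μ₀) (hlb : ∀ u, μ₀ ≤ g u) :
    Continuous (fun t => ∫ s in Set.Ioi (0:ℝ),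
      F (H (t - s)) * Real.exp (-∫ u in (t - s)..t, g u)) := by
  apply MeasureTheory.continuous_of_dominated
    (bound := fun s => C * Real.exp (-(μ₀ * s)))
  · intro t
    exact (step_integrand_integrable hFcont hFbdd hH hg hμ₀ hlb t).aestronglyMeasurable
  · intro t
    filter_upwards [ae_restrict_mem measurableSet_Ioi] with s hs
    exact step_norm_le hFbdd hg hlb (le_of_lt hs) t
  · apply Integrable.const_mul
    have := exp_neg_integrableOn_Ioi 0 hμ₀
    simpa [neg_mul, mul_comm, IntegrableOn] using this
  · filter_upwards with s
    have h1 : Continuous fun t : ℝ => Real.exp (-∫ u in (t - s)..t, g u) := by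
      have := (exp_term_cont2 hg).comp
        (Continuous.prodMk (continuous_id : Continuous fun t : ℝ => t)
          (continuous_const : Continuous fun _ : ℝ => s))
      exact this
    exact ((hFcont.comp (hH.comp (continuous_id.sub continuous_const))).mul h1)

end Steps

section HStep
variable {G K : ℝ → ℝ} {C : ℝ}

lemma hstep_integrable (hGcont : Continuous G) (hGbdd : ∀ t, |G t| ≤ C)
    (hKmeas : Measurable K) (hKint : IntegrableOn K (Set.Ioi 0)) (u : ℝ) :
    IntegrableOn (fun φ => G (u - φ) * K φ) (Set.Ioi 0) := by
  apply Integrable.mono' (g := fun φ => C * |K φ|)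
  · exact hKint.abs.const_mul _
  · exact ((hGcont.comp (continuous_const.sub continuous_id)).aestronglyMeasurable.restrict.mul
      hKmeas.aestronglyMeasurable.restrict)
  · filter_upwards with φ
    rw [norm_mul, Real.norm_eq_abs, Real.norm_eq_abs]
    exact mul_le_mul_of_nonneg_right (hGbdd _) (abs_nonneg _)

lemma hstep_bdd (hGcont : Continuous G) (hGbdd : ∀ t, |G t| ≤ C)
    (hKmeas : Measurable K) (hKint : IntegrableOn K (Set.Ioi 0)) :
    ∃ D, ∀ u, |∫ φ in Set.Ioi (0:ℝ), G (u - φ) * K φ| ≤ D := by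
  refine ⟨∫ φ in Set.Ioi (0:ℝ), C * |K φ|, fun u => ?_⟩
  calc |∫ φ in Set.Ioi (0:ℝ), G (u - φ) * K φ|
      ≤ ∫ φ in Set.Ioi (0:ℝ), ‖G (u - φ) * K φ‖ := by
        rw [← Real.norm_eq_abs]; exact norm_integral_le_integral_norm _
    _ ≤ ∫ φ in Set.Ioi (0:ℝ), C * |K φ| := by
        apply integral_mono_of_nonneg
        · filter_upwards with φ; positivity
        · exact hKint.abs.const_mul _
        · filter_upwards with φ
          rw [norm_mul, Real.norm_eq_abs, Real.norm_eq_abs]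
          exact mul_le_mul_of_nonneg_right (hGbdd _) (abs_nonneg _)

lemma hstep_cont (hGcont : Continuous G) (hGbdd : ∀ t, |G t| ≤ C)
    (hKmeas : Measurable K) (hKint : IntegrableOn K (Set.Ioi 0)) :
    Continuous (fun u => ∫ φ in Set.Ioi (0:ℝ), G (u - φ) * K φ) := by
  apply MeasureTheory.continuous_of_dominated (bound := fun φ => C * |K φ|)
  · intro u; exact (hstep_integrable hGcont hGbdd hKmeas hKint u).aestronglyMeasurable
  · intro u
    filter_upwards with φ
    rw [norm_mul, Real.norm_eq_abs, Real.norm_eq_abs]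
    exact mul_le_mul_of_nonneg_right (hGbdd _) (abs_nonneg _)
  · exact hKint.abs.const_mul _
  · filter_upwards with φ
    exact (hGcont.comp (continuous_id.sub continuous_const)).mul continuous_const

end HStep

/-- Continuity and boundedness of the nested functionals, plus of the inner averages. -/
lemma cyclicG_cont_bdd (f K : ℕ → ℝ → ℝ) (μ : ℝ → ℝ) (x : ℝ → ℝ) {μ₀ : ℝ}
    (hxcont : Continuous x) (hxbdd : ∃ C, ∀ t, |x t| ≤ C)
    (hμcont : Continuous μ) (hμ₀ : 0 < μ₀) (hμlb : ∀ y, μ₀ ≤ μ y) :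
    ∀ i, (∀ j, 1 ≤ j → j ≤ i → Continuous (f j) ∧ (∃ C, ∀ y, |f j y| ≤ C)
        ∧ Measurable (K j) ∧ IntegrableOn (K j) (Set.Ioi 0)) →
      Continuous (cyclicG f K μ i x) ∧ ∃ C, ∀ t, |cyclicG f K μ i x t| ≤ C := by
  have hg : Continuous fun u => μ (x u) := hμcont.comp hxcont
  have hglb : ∀ u, μ₀ ≤ μ (x u) := fun u => hμlb _
  intro i
  induction i with
  | zero => intro _; exact ⟨hxcont, hxbdd⟩
  | succ i ih =>
    intro hyp
    obtain ⟨hGc, CG, hGb⟩ := ih (fun j h1 h2 => hyp j h1 (h2.trans (Nat.le_succ i)))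
    obtain ⟨hfc, ⟨Cf, hfb⟩, hKm, hKi⟩ := hyp (i+1) (Nat.le_add_left 1 i) le_rfl
    have hHc : Continuous (fun u => ∫ φ in Set.Ioi (0:ℝ), cyclicG f K μ i x (u - φ) * K (i+1) φ) :=
      hstep_cont hGc hGb hKm hKi
    constructor
    · have := step_G_cont (H := fun u => ∫ φ in Set.Ioi (0:ℝ),
        cyclicG f K μ i x (u - φ) * K (i+1) φ) hfc hfb hHc hg hμ₀ hglb
      exact this
    · obtain ⟨D, hD⟩ := step_G_bdd (H := fun u => ∫ φ in Set.Ioi (0:ℝ),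
        cyclicG f K μ i x (u - φ) * K (i+1) φ) hfb hg hμ₀ hglb
      refine ⟨D, fun t => ?_⟩
      have := hD t
      simpa only [cyclicG] using this

/-- The weighted average over the kernel `K (i+1)` of level `i`. -/
noncomputable def Hav (f K : ℕ → ℝ → ℝ) (μ : ℝ → ℝ) (x : ℝ → ℝ) (i : ℕ) (u : ℝ) : ℝ :=
  ∫ φ in Set.Ioi (0:ℝ), cyclicG f K μ i x (u - φ) * K (i+1) φ

lemma cyclicG_succ_eq (f K : ℕ → ℝ → ℝ) (μ : ℝ → ℝ) (x : ℝ → ℝ) (i : ℕ) (t : ℝ) :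
    cyclicG f K μ (i+1) x t
      = ∫ s in Set.Ioi (0:ℝ), f (i+1) (Hav f K μ x i (t - s))
          * Real.exp (-∫ u in (t - s)..t, μ (x u)) := rfl

section NonnegSteps

variable (f K : ℕ → ℝ → ℝ) (μ : ℝ → ℝ) (x : ℝ → ℝ) (i : ℕ) (T : ℝ)

lemma Hav_nonneg (hG : ∀ r ≤ T, 0 ≤ cyclicG f K μ i x r)
    (hKnn : ∀ φ, 0 ≤ φ → 0 ≤ K (i+1) φ) :
    ∀ u ≤ T, 0 ≤ Hav f K μ x i u := by
  intro u hu
  apply setIntegral_nonneg measurableSet_Ioi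
  intro φ hφ
  exact mul_nonneg (hG _ (by simp only [mem_Ioi] at hφ; linarith)) (hKnn _ (le_of_lt hφ))

lemma Hav_nonneg_silent {c : ℝ} (hc : 0 < c)
    (hG : ∀ r ≤ T, 0 ≤ cyclicG f K μ i x r)
    (hKnn : ∀ φ, 0 ≤ φ → 0 ≤ K (i+1) φ)
    (hKint : IntegrableOn (K (i+1)) (Set.Ioi 0))
    (hK0 : ∫ φ in Set.Ioo (0:ℝ) c, K (i+1) φ = 0) :
    ∀ u, u ≤ T + c → 0 ≤ Hav f K μ x i u := by
  intro u hu
  have hK0' : ∀ᵐ φ, φ ∈ Set.Ioo (0:ℝ) c → K (i+1) φ = 0 := by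
    have hnn : 0 ≤ᵐ[volume.restrict (Set.Ioo (0:ℝ) c)] K (i+1) := by
      filter_upwards [ae_restrict_mem measurableSet_Ioo] with φ hφ
      exact hKnn _ (le_of_lt hφ.1)
    have hint : IntegrableOn (K (i+1)) (Set.Ioo (0:ℝ) c) :=
      hKint.mono_set (fun φ hφ => hφ.1)
    have := (integral_eq_zero_iff_of_nonneg_ae hnn hint).1 hK0
    exact (ae_restrict_iff' measurableSet_Ioo).1 this
  apply integral_nonneg_of_ae
  filter_upwards [ae_restrict_mem measurableSet_Ioi, ae_restrict_of_ae hK0'] with φ hφ h2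
  rcases lt_or_ge φ c with h | h
  · simp [h2 ⟨hφ, h⟩]
  · simp only [Pi.zero_apply]
    exact mul_nonneg (hG _ (by simp only [mem_Ioi] at hφ; linarith))
      (hKnn _ (le_of_lt hφ))

lemma G_nonneg_step (hH : ∀ u ≤ T, 0 ≤ Hav f K μ x i u)
    (hfnn : ∀ z : ℝ, 0 ≤ z → 0 ≤ f (i+1) z) :
    ∀ r ≤ T, 0 ≤ cyclicG f K μ (i+1) x r := by
  intro r hr
  rw [cyclicG_succ_eq]
  apply setIntegral_nonneg measurableSet_Ioi
  intro s hs
  simp only [mem_Ioi] at hs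
  exact mul_nonneg (hfnn _ (hH _ (by linarith))) (Real.exp_pos _).le

end NonnegSteps

section PosSteps

variable (f K : ℕ → ℝ → ℝ) (μ : ℝ → ℝ) (x : ℝ → ℝ) (i : ℕ) {T a b μ₀ Cf CG : ℝ}

lemma G_pos_step (hH : ∀ u ≤ T, 0 ≤ Hav f K μ x i u)
    (hHpos : ∀ u, a < u → u < b → u ≤ T → 0 < Hav f K μ x i u)
    (hab : a < b)
    (hfnn : ∀ z : ℝ, 0 ≤ z → 0 ≤ f (i+1) z)
    (hfpos : ∀ z : ℝ, 0 < z → 0 < f (i+1) z)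
    (hfc : Continuous (f (i+1))) (hfb : ∀ y, |f (i+1) y| ≤ Cf)
    (hHc : Continuous (Hav f K μ x i))
    (hμc : Continuous μ) (hxc : Continuous x) (hμ₀ : 0 < μ₀) (hμlb : ∀ y, μ₀ ≤ μ y) :
    ∀ r, a < r → r ≤ T → 0 < cyclicG f K μ (i+1) x r := by
  intro r har hrT
  rw [cyclicG_succ_eq]
  have hint : IntegrableOn
      (fun s => f (i+1) (Hav f K μ x i (r - s)) * Real.exp (-∫ u in (r - s)..r, μ (x u)))
      (Set.Ioi 0) :=
    step_integrand_integrable hfc hfb hHc (hμc.comp hxc) hμ₀ (fun u => hμlb _) r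
  have hnn : 0 ≤ᵐ[volume.restrict (Set.Ioi (0:ℝ))]
      (fun s => f (i+1) (Hav f K μ x i (r - s)) * Real.exp (-∫ u in (r - s)..r, μ (x u))) := by
    filter_upwards [ae_restrict_mem measurableSet_Ioi] with s hs
    simp only [mem_Ioi] at hs
    exact mul_nonneg (hfnn _ (hH _ (by linarith))) (Real.exp_pos _).le
  rw [setIntegral_pos_iff_support_of_nonneg_ae hnn hint]
  have hsub : Set.Ioo (max 0 (r - b)) (r - a) ⊆
      (Function.support fun s =>
        f (i+1) (Hav f K μ x i (r - s)) * Real.exp (-∫ u in (r - s)..r, μ (x u)))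
      ∩ Set.Ioi 0 := by
    intro s hs
    obtain ⟨hs1, hs2⟩ := hs
    have hs0 : 0 < s := lt_of_le_of_lt (le_max_left _ _) hs1
    have h1 : a < r - s := by linarith
    have h2 : r - s < b := by
      have := lt_of_le_of_lt (le_max_right 0 (r - b)) hs1; linarith
    refine ⟨?_, hs0⟩
    apply ne_of_gt
    exact mul_pos (hfpos _ (hHpos _ h1 h2 (by linarith))) (Real.exp_pos _)
  apply lt_of_lt_of_le _ (measure_mono hsub)
  rw [Real.volume_Ioo]
  apply ENNReal.ofReal_pos.2
  have : max 0 (r - b) < r - a := by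
    apply max_lt (by linarith) (by linarith)
  linarith [this]

lemma Hav_pos_step
    (hG : ∀ r ≤ T, 0 ≤ cyclicG f K μ i x r)
    (hGpos : ∀ r, a < r → r ≤ T → 0 < cyclicG f K μ i x r)
    (hGc : Continuous (cyclicG f K μ i x)) (hGb : ∀ t, |cyclicG f K μ i x t| ≤ CG)
    (hKm : Measurable (K (i+1))) (hKint : IntegrableOn (K (i+1)) (Set.Ioi 0))
    (hKnn : ∀ φ, 0 ≤ φ → 0 ≤ K (i+1) φ)
    (hKmass : ∀ c, 0 < c → 0 < ∫ φ in Set.Ioo (0:ℝ) c, K (i+1) φ) :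
    ∀ u, a < u → u ≤ T → 0 < Hav f K μ x i u := by
  intro u hau huT
  have hint : IntegrableOn (fun φ => cyclicG f K μ i x (u - φ) * K (i+1) φ) (Set.Ioi 0) :=
    hstep_integrable hGc hGb hKm hKint u
  have hnn : 0 ≤ᵐ[volume.restrict (Set.Ioi (0:ℝ))]
      (fun φ => cyclicG f K μ i x (u - φ) * K (i+1) φ) := by
    filter_upwards [ae_restrict_mem measurableSet_Ioi] with φ hφ
    simp only [mem_Ioi] at hφ
    exact mul_nonneg (hG _ (by linarith)) (hKnn _ hφ.le)
  rw [Hav, setIntegral_pos_iff_support_of_nonneg_ae hnn hint]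
  set E : Set ℝ := Set.Ioo 0 (u - a) ∩ {φ | K (i+1) φ ≠ 0} with hE
  have hEsub : E ⊆
      (Function.support fun φ => cyclicG f K μ i x (u - φ) * K (i+1) φ) ∩ Set.Ioi 0 := by
    rintro φ ⟨⟨hφ0, hφua⟩, hKφ⟩
    refine ⟨?_, hφ0⟩
    apply ne_of_gt
    apply mul_pos (hGpos _ (by linarith) (by linarith))
    exact lt_of_le_of_ne (hKnn _ hφ0.le) (Ne.symm hKφ)
  apply lt_of_lt_of_le _ (measure_mono hEsub)
  by_contra hcon
  push_neg at hcon
  have hE0 : volume E = 0 := le_antisymm (by simpa using hcon) (zero_le)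
  have hK0' : ∀ᵐ φ, φ ∈ Set.Ioo (0:ℝ) (u - a) → K (i+1) φ = 0 := by
    rw [ae_iff]
    apply measure_mono_null _ hE0
    intro φ hφ
    simp only [Set.mem_setOf_eq, not_forall] at hφ
    exact ⟨hφ.1, hφ.2⟩
  have : ∫ φ in Set.Ioo (0:ℝ) (u - a), K (i+1) φ = 0 := by
    rw [setIntegral_congr_ae measurableSet_Ioo (g := fun _ => (0:ℝ))
      (by filter_upwards [hK0'] with φ h1 h2; exact h1 h2)]
    simp
  exact absurd this (ne_of_gt (hKmass _ (by linarith)))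

end PosSteps

end AuxLemmas

open Set in
/-- Proposition 3.1: solutions of the reduced scalar distributed DDE evolving
from non-negative initial history with positive weighted averages remain
non-negative. -/
theorem stmt6
    (n : ℕ) (hn : 2 ≤ n)
    (f K : ℕ → ℝ → ℝ) (μ : ℝ → ℝ) (μ₀ μmax : ℝ)
    (hfcont : ∀ i, 1 ≤ i → i ≤ n → Continuous (f i))
    (hfbdd : ∀ i, 1 ≤ i → i ≤ n → ∃ C, ∀ y, |f i y| ≤ C)
    (hf0 : ∀ i, 1 ≤ i → i ≤ n → f i 0 = 0)
    (hfpos : ∀ i, 1 ≤ i → i ≤ n → ∀ y : ℝ, 0 < y → 0 < f i y)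
    (hKmeas : ∀ i, 1 ≤ i → i ≤ n → Measurable (K i))
    (hKnonneg : ∀ i, 1 ≤ i → i ≤ n → ∀ φ : ℝ, 0 ≤ φ → 0 ≤ K i φ)
    (hKint : ∀ i, 1 ≤ i → i ≤ n → ∫ φ in Set.Ioi (0 : ℝ), K i φ = 1)
    (hμcont : Continuous μ) (hμ₀ : 0 < μ₀)
    (hμlb : ∀ y, μ₀ ≤ μ y) (hμub : ∀ y, μ y ≤ μmax)
    (x ξ : ℝ → ℝ)
    (hxbdd : ∃ C, ∀ t, |x t| ≤ C) (hxcont : Continuous x)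
    (hhist : ∀ s : ℝ, s ≤ 0 → x s = ξ s)
    (hξnonneg : ∀ s : ℝ, s ≤ 0 → 0 ≤ ξ s)
    (hξpos : ∀ i, 1 ≤ i → i ≤ n →
      0 < ∫ φ in Set.Ioi (0 : ℝ), ξ (-φ) * K i φ)
    (hode : ∀ t : ℝ, 0 < t → HasDerivAt x
      (f n (∫ φ in Set.Ioi (0 : ℝ), cyclicG f K μ (n - 1) x (t - φ) * K n φ)
        - μ (x t) * x t) t) :
    ∀ t : ℝ, 0 ≤ t → 0 ≤ x t := by
  obtain ⟨m, rfl⟩ : ∃ m, n = m + 2 := ⟨n - 2, by omega⟩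
  set n := m + 2 with hndef
  by_contra hcon
  push_neg at hcon
  obtain ⟨t₀, ht₀, hneg0⟩ := hcon
  set S : Set ℝ := {t : ℝ | 0 ≤ t ∧ x t < 0} with hSdef
  have hSne : S.Nonempty := ⟨t₀, ht₀, hneg0⟩
  have hSbb : BddBelow S := ⟨0, fun t ht => ht.1⟩
  set t₁ : ℝ := sInf S with ht₁def
  have ht₁0 : 0 ≤ t₁ := le_csInf hSne (fun t ht => ht.1)
  have hlow : ∀ t, 0 ≤ t → t < t₁ → 0 ≤ x t := by
    intro t h1 h2
    by_contra h
    exact absurd (csInf_le hSbb ⟨h1, lt_of_not_ge h⟩) (not_le.2 h2)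
  have hnear : ∀ ε : ℝ, 0 < ε → ∃ t ∈ S, t < t₁ + ε := by
    intro ε hε
    exact (csInf_lt_iff hSbb hSne).1 (by linarith)
  have hxt₁le : x t₁ ≤ 0 := by
    by_contra h
    push_neg at h
    have hcont := hxcont.continuousAt (x := t₁)
    rw [Metric.continuousAt_iff] at hcont
    obtain ⟨δ, hδ, hball⟩ := hcont (x t₁) h
    obtain ⟨t, htS, htlt⟩ := hnear δ hδ
    have h1 : t₁ ≤ t := csInf_le hSbb htS
    have h2 : dist t t₁ < δ := by
      rw [Real.dist_eq, abs_of_nonneg (by linarith)]; linarith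
    have := hball h2
    rw [Real.dist_eq] at this
    have := abs_lt.1 this
    have : 0 < x t := by linarith
    exact absurd htS.2 (not_lt.2 this.le)
  have hxt₁ : x t₁ = 0 := by
    refine le_antisymm hxt₁le ?_
    rcases eq_or_lt_of_le ht₁0 with h | h
    · rw [← h, hhist 0 le_rfl]; exact hξnonneg 0 le_rfl
    · have hne : (nhdsWithin t₁ (Set.Ico 0 t₁)).NeBot := by
        rw [← mem_closure_iff_nhdsWithin_neBot, closure_Ico (ne_of_lt h)]
        exact ⟨ht₁0, le_rfl⟩
      have htd : Filter.Tendsto x (nhdsWithin t₁ (Set.Ico 0 t₁)) (nhds (x t₁)) :=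
        (hxcont.tendsto t₁).mono_left nhdsWithin_le_nhds
      refine ge_of_tendsto htd ?_
      filter_upwards [eventually_mem_nhdsWithin] with t ht
      exact hlow t ht.1 ht.2
  have hxnn : ∀ r, r ≤ t₁ → 0 ≤ x r := by
    intro r hr
    rcases le_or_gt r 0 with h | h
    · rw [hhist r h]; exact hξnonneg r h
    · rcases eq_or_lt_of_le hr with h2 | h2
      · rw [h2, hxt₁]
      · exact hlow r h.le h2
  -- bundled hypotheses
  have hfnn : ∀ j, 1 ≤ j → j ≤ n → ∀ z : ℝ, 0 ≤ z → 0 ≤ f j z := by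
    intro j h1 h2 z hz
    rcases eq_or_lt_of_le hz with h | h
    · rw [← h, hf0 j h1 h2]
    · exact (hfpos j h1 h2 z h).le
  have hKI : ∀ j, 1 ≤ j → j ≤ n → IntegrableOn (K j) (Set.Ioi 0) := by
    intro j h1 h2; exact kint_integrable (hKint j h1 h2)
  have hinfra : ∀ i, i ≤ m + 1 → Continuous (cyclicG f K μ i x)
      ∧ ∃ C, ∀ t, |cyclicG f K μ i x t| ≤ C := by
    intro i hi
    apply cyclicG_cont_bdd f K μ x hxcont hxbdd hμcont hμ₀ hμlb i
    intro j h1 h2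
    have h3 : j ≤ n := by omega
    exact ⟨hfcont j h1 h3, hfbdd j h1 h3, hKmeas j h1 h3, hKI j h1 h3⟩
  have hHavc : ∀ i, i ≤ m + 1 → Continuous (Hav f K μ x i) := by
    intro i hi
    obtain ⟨hc, C, hb⟩ := hinfra i hi
    have h1 : (1:ℕ) ≤ i + 1 := by omega
    have h2 : i + 1 ≤ n := by omega
    exact hstep_cont hc hb (hKmeas _ h1 h2) (hKI _ h1 h2)
  -- non-negativity of all levels up to time t₁
  have hGnn : ∀ i, i ≤ m + 1 → ∀ r, r ≤ t₁ → 0 ≤ cyclicG f K μ i x r := by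
    intro i
    induction i with
    | zero => intro _ r hr; exact hxnn r hr
    | succ i ih =>
      intro hi
      have h1 : (1:ℕ) ≤ i + 1 := by omega
      have h2 : i + 1 ≤ n := by omega
      apply G_nonneg_step f K μ x i t₁
        (Hav_nonneg f K μ x i t₁ (ih (by omega)) (hKnonneg _ h1 h2))
        (hfnn _ h1 h2)
  -- key dichotomy: either all kernels have mass near 0, or some kernel is silent near 0
  have hF : ∃ ρ : ℝ, 0 < ρ ∧ ∀ t, t₁ < t → t ≤ t₁ + ρ → 0 ≤ f n (Hav f K μ x (m+1) t) := by
    by_cases hcase : ∀ j, 1 ≤ j → j ≤ n → ∀ c : ℝ, 0 < c → 0 < ∫ φ in Set.Ioo (0:ℝ) c, K j φ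
    · -- all kernels have mass arbitrarily close to 0
      -- the bottom average is positive near time 0
      have hH0pos : 0 < Hav f K μ x 0 0 := by
        have heq : Hav f K μ x 0 0 = ∫ φ in Set.Ioi (0:ℝ), ξ (-φ) * K 1 φ := by
          apply setIntegral_congr_fun measurableSet_Ioi
          intro φ hφ
          simp only [mem_Ioi] at hφ
          show cyclicG f K μ 0 x (0 - φ) * K (0+1) φ = ξ (-φ) * K 1 φ
          have : cyclicG f K μ 0 x (0 - φ) = ξ (-φ) := by
            show x (0 - φ) = ξ (-φ)
            rw [zero_sub]; exact hhist _ (by linarith)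
          rw [this]
        rw [heq]
        exact hξpos 1 le_rfl (by omega)
      obtain ⟨δ, hδ0, hδ⟩ : ∃ δ : ℝ, 0 < δ ∧ ∀ u, |u| < δ → 0 < Hav f K μ x 0 u := by
        have hcontA := (hHavc 0 (by omega)).continuousAt (x := 0)
        rw [Metric.continuousAt_iff] at hcontA
        obtain ⟨δ, hδ0, hball⟩ := hcontA _ hH0pos
        refine ⟨δ, hδ0, fun u hu => ?_⟩
        have := hball (by rw [Real.dist_eq, sub_zero]; exact hu)
        rw [Real.dist_eq] at this
        have := abs_lt.1 this
        linarith [this.1]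
      -- positivity propagates up the chain
      have hchain : ∀ i, 1 ≤ i → i ≤ m + 1 →
          ∀ r, -δ < r → r ≤ t₁ → 0 < cyclicG f K μ i x r := by
        intro i
        induction i with
        | zero => omega
        | succ i ih =>
          intro _ hi
          obtain ⟨Cf, hCf⟩ := hfbdd (i+1) (by omega) (by omega)
          rcases Nat.eq_zero_or_pos i with h0 | hpos
          · subst h0
            exact G_pos_step f K μ x 0 (T := t₁) (a := -δ) (b := δ)
              (Hav_nonneg f K μ x 0 t₁ (fun r hr => hxnn r hr) (hKnonneg 1 le_rfl (by omega)))
              (fun u h1 h2 _ => hδ u (abs_lt.2 ⟨by linarith, h2⟩))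
              (by linarith)
              (hfnn 1 le_rfl (by omega)) (hfpos 1 le_rfl (by omega))
              (hfcont 1 le_rfl (by omega)) hCf (hHavc 0 (by omega))
              hμcont hxcont hμ₀ hμlb
          · obtain ⟨hGc, CG, hGb⟩ := hinfra i (by omega)
            have hHpos : ∀ u, -δ < u → u ≤ t₁ → 0 < Hav f K μ x i u := by
              apply Hav_pos_step f K μ x i (hGnn i (by omega))
                (ih hpos (by omega)) hGc hGb
                (hKmeas (i+1) (by omega) (by omega)) (hKI (i+1) (by omega) (by omega))
                (hKnonneg (i+1) (by omega) (by omega))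
                (fun c hc => hcase (i+1) (by omega) (by omega) c hc)
            exact G_pos_step f K μ x i (T := t₁) (a := -δ) (b := t₁ + 1)
              (Hav_nonneg f K μ x i t₁ (hGnn i (by omega)) (hKnonneg (i+1) (by omega) (by omega)))
              (fun u h1 _ h3 => hHpos u h1 h3)
              (by linarith)
              (hfnn (i+1) (by omega) (by omega)) (hfpos (i+1) (by omega) (by omega))
              (hfcont (i+1) (by omega) (by omega)) hCf (hHavc i (by omega))
              hμcont hxcont hμ₀ hμlb
      -- hence the top average is positive at t₁, and near t₁ by continuity
      have hApos : 0 < Hav f K μ x (m+1) t₁ := by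
        obtain ⟨hGc, CG, hGb⟩ := hinfra (m+1) le_rfl
        exact Hav_pos_step f K μ x (m+1) (hGnn (m+1) le_rfl)
          (hchain (m+1) (by omega) le_rfl) hGc hGb
          (hKmeas (m+2) (by omega) le_rfl) (hKI (m+2) (by omega) le_rfl)
          (hKnonneg (m+2) (by omega) le_rfl)
          (fun c hc => hcase (m+2) (by omega) le_rfl c hc)
          t₁ (by linarith) le_rfl
      have hcontA := (hHavc (m+1) le_rfl).continuousAt (x := t₁)
      rw [Metric.continuousAt_iff] at hcontA
      obtain ⟨ρ, hρ0, hball⟩ := hcontA _ hApos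
      refine ⟨ρ/2, by linarith, fun t h1 h2 => ?_⟩
      have hA : 0 < Hav f K μ x (m+1) t := by
        have := hball (show dist t t₁ < ρ by rw [Real.dist_eq, abs_of_nonneg (by linarith)]; linarith)
        rw [Real.dist_eq] at this
        have := abs_lt.1 this
        linarith [this.1]
      exact (hfpos n (by omega) le_rfl _ hA).le
    · -- some kernel is silent on an initial interval (0,c)
      push_neg at hcase
      obtain ⟨j, hj1, hjn, c, hc0, hKjle⟩ := hcase
      have hKj0 : ∫ φ in Set.Ioo (0:ℝ) c, K j φ = 0 := by
        refine le_antisymm hKjle ?_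
        apply setIntegral_nonneg measurableSet_Ioo
        intro φ hφ
        exact hKnonneg j hj1 hjn φ hφ.1.le
      obtain ⟨p, rfl⟩ : ∃ p, j = p + 1 := ⟨j - 1, by omega⟩
      -- above level p, everything is non-negative up to time t₁ + c
      have hup : ∀ i, i ≤ m + 1 → p + 1 ≤ i → ∀ r, r ≤ t₁ + c → 0 ≤ cyclicG f K μ i x r := by
        intro i
        induction i with
        | zero => omega
        | succ i ih =>
          intro hi hpi
          rcases eq_or_lt_of_le hpi with he | hlt
          · -- i + 1 = p + 1 : the silent level
            have hep : p = i := by omega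
            subst hep
            apply G_nonneg_step f K μ x p (t₁ + c)
              (Hav_nonneg_silent f K μ x p t₁ hc0 (hGnn p (by omega))
                (hKnonneg (p+1) hj1 hjn) (hKI (p+1) hj1 hjn) hKj0)
              (hfnn (p+1) hj1 hjn)
          · have hpile : p + 1 ≤ i := by omega
            apply G_nonneg_step f K μ x i (t₁ + c)
              (Hav_nonneg f K μ x i (t₁ + c) (ih (by omega) hpile)
                (hKnonneg (i+1) (by omega) (by omega)))
              (hfnn (i+1) (by omega) (by omega))
      have hAnn : ∀ t, t ≤ t₁ + c → 0 ≤ Hav f K μ x (m+1) t := by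
        rcases eq_or_lt_of_le (show p + 1 ≤ m + 2 by omega) with he | hlt
        · -- the top kernel K n itself is silent
          have hep : p = m + 1 := by omega
          subst hep
          exact Hav_nonneg_silent f K μ x (m+1) t₁ hc0 (hGnn (m+1) le_rfl)
            (hKnonneg (m+2) hj1 hjn) (hKI (m+2) hj1 hjn) hKj0
        · exact Hav_nonneg f K μ x (m+1) (t₁ + c)
            (hup (m+1) le_rfl (by omega)) (hKnonneg (m+2) (by omega) le_rfl)
      exact ⟨c, hc0, fun t _ h2 => hfnn n (by omega) le_rfl _ (hAnn t h2)⟩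
  -- final contradiction via monotonicity on the last negative excursion
  obtain ⟨ρ, hρ0, hFnn⟩ := hF
  obtain ⟨t₂, ht₂S, ht₂lt⟩ := hnear ρ hρ0
  have ht₁t₂ : t₁ ≤ t₂ := csInf_le hSbb ht₂S
  have hxt₂ : x t₂ < 0 := ht₂S.2
  have ht₁lt : t₁ < t₂ := by
    rcases eq_or_lt_of_le ht₁t₂ with h | h
    · rw [← h] at hxt₂; linarith [hxt₁, hxt₂]
    · exact h
  set Z : Set ℝ := {t | t ∈ Set.Icc t₁ t₂ ∧ x t = 0} with hZdef
  have hZcl : IsClosed Z := by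
    have : Z = Set.Icc t₁ t₂ ∩ x ⁻¹' {0} := by
      ext t; simp [hZdef, Set.mem_Icc]
    rw [this]
    exact isClosed_Icc.inter (isClosed_singleton.preimage hxcont)
  have hZcomp : IsCompact Z :=
    isCompact_Icc.of_isClosed_subset hZcl (fun t ht => ht.1)
  have hZne : Z.Nonempty := ⟨t₁, ⟨le_rfl, ht₁t₂⟩, hxt₁⟩
  set T : ℝ := sSup Z with hTdef
  have hTZ : T ∈ Z := hZcomp.sSup_mem hZne
  have hxT : x T = 0 := hTZ.2
  have hTt₁ : t₁ ≤ T := hTZ.1.1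
  have hTt₂ : T < t₂ := by
    rcases eq_or_lt_of_le hTZ.1.2 with h | h
    · rw [h] at hxT; linarith
    · exact h
  have hZbdd : BddAbove Z := hZcomp.bddAbove
  have hneg2 : ∀ t, T < t → t ≤ t₂ → x t < 0 := by
    intro t h1 h2
    by_contra h
    push_neg at h
    have hsub : Set.Icc (x t₂) (x t) ⊆ x '' Set.Icc t t₂ :=
      intermediate_value_Icc' h2 hxcont.continuousOn
    obtain ⟨z, hz, hxz⟩ := hsub ⟨hxt₂.le, h⟩
    have : z ∈ Z := ⟨⟨by linarith [hz.1], hz.2⟩, hxz⟩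
    have := le_csSup hZbdd this
    linarith [hz.1]
  have hmono : StrictMonoOn x (Set.Icc T t₂) := by
    apply strictMonoOn_of_deriv_pos (convex_Icc T t₂) hxcont.continuousOn
    intro t ht
    rw [interior_Icc] at ht
    have ht0 : 0 < t := lt_of_le_of_lt (le_trans ht₁0 hTt₁) ht.1
    have hD := hode t ht0
    rw [hD.deriv]
    have hAnn : 0 ≤ f n (∫ φ in Set.Ioi (0:ℝ), cyclicG f K μ (n-1) x (t - φ) * K n φ) := by
      have := hFnn t (lt_of_le_of_lt hTt₁ ht.1) (by linarith [ht.2])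
      exact this
    have hxneg : x t < 0 := hneg2 t ht.1 ht.2.le
    have hμpos : 0 < μ (x t) := lt_of_lt_of_le hμ₀ (hμlb _)
    nlinarith
  have := hmono (Set.left_mem_Icc.2 hTt₂.le) (Set.right_mem_Icc.2 hTt₂.le) hTt₂
  rw [hxT] at this
  linarith
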